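/- Let T = (α β; β δ) be a 2×2 real symmetric positive definite matrix with D = det T, and let z_T = (−β + i√D)/α ∈ ℍ be the associated point in the upper half-plane. Then for every γ = (a b; c d) ∈ SL₂(ℝ), acting on ℍ by Möbius transformations, one has u(z_T, γ·z_T) = [ (cβ² − cD − (d−a)αβ − bα²)² + ((d−a)α − 2cβ)²·D ] / (4·α²·D). -/

import Mathlib

/-- explicit formula for the point-pair invariant `u(z_T, γ z_T)`. -/
theorem stmt_12 (α β δ : ℝ) (hα : 0 < α) (D : ℝ) (hD : D = α*δ - β^2) (hDpos : 0 < D)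
    (a b c d : ℝ) (hdet : a*d - b*c = 1) :
    let z : ℂ := ((-β : ℝ) + (Real.sqrt D : ℝ) * Complex.I) / (α : ℂ)
    let w : ℂ := ((a : ℂ) * z + (b : ℂ)) / ((c : ℂ) * z + (d : ℂ))
    ‖z - w‖^2 / (4 * z.im * w.im)
      = ((c*β^2 - c*D - (d-a)*α*β - b*α^2)^2 + ((d-a)*α - 2*c*β)^2 * D) / (4*α^2*D) := by
  intro z w
  set s := Real.sqrt D with hsdef
  have hs : s ^ 2 = D := Real.sq_sqrt hDpos.le
  have hspos : 0 < s := Real.sqrt_pos.mpr hDpos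
  have hα0 : α ≠ 0 := hα.ne'
  have hαC : (α : ℂ) ≠ 0 := by exact_mod_cast hα0
  have hz_re : z.re = -β / α := by
    simp [z, Complex.div_ofReal_re]
  have hz_im : z.im = s / α := by
    simp [z, Complex.div_ofReal_im]
    rfl
  have hP : (c : ℂ) * z + d ≠ 0 := by
    intro h
    have him : ((c : ℂ) * z + d).im = 0 := by rw [h]; simp
    have hre : ((c : ℂ) * z + d).re = 0 := by rw [h]; simp
    simp [Complex.add_im, Complex.mul_im, hz_im, hz_re] at him hre
    have hc : c = 0 := by
      rcases him with h1 | h1 | h1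
      · exact h1
      · exact absurd h1 hspos.ne'
      · exact absurd h1 hα0
    rw [hc] at hre hdet
    simp at hre
    rw [hre] at hdet
    simp at hdet
  have hnP : Complex.normSq ((c : ℂ) * z + d) ≠ 0 := by
    simpa [Complex.normSq_eq_zero] using hP
  have hzw : z - w = ((c:ℂ) * z^2 + ((d:ℝ)-(a:ℝ) : ℝ) * z - b) / ((c:ℂ) * z + d) := by
    rw [eq_div_iff hP]
    simp only [w]
    rw [sub_mul, div_mul_cancel₀ _ hP]
    push_cast
    ring
  have habs : ‖z - w‖ ^ 2
      = Complex.normSq ((c:ℂ) * z^2 + ((d:ℝ)-(a:ℝ) : ℝ) * z - b)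
        / Complex.normSq ((c : ℂ) * z + d) := by
    rw [hzw, norm_div, div_pow, Complex.sq_norm, Complex.sq_norm]
  have hwim : w.im = (s / α) / Complex.normSq ((c : ℂ) * z + d) := by
    rw [show w.im = ((↑a * z + ↑b).im * (↑c * z + ↑d).re / Complex.normSq (↑c * z + ↑d) -
      (↑a * z + ↑b).re * (↑c * z + ↑d).im / Complex.normSq (↑c * z + ↑d)) from
      Complex.div_im _ _, div_sub_div_same]
    congr 1
    simp only [Complex.add_im, Complex.add_re, Complex.mul_im, Complex.mul_re,
      Complex.ofReal_re, Complex.ofReal_im, hz_re, hz_im]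
    linear_combination (s / α) * hdet
  have hN : Complex.normSq ((c:ℂ) * z^2 + ((d:ℝ)-(a:ℝ) : ℝ) * z - b)
      = ((c*β^2 - c*D - (d-a)*α*β - b*α^2)^2 + ((d-a)*α - 2*c*β)^2 * D) / α^4 := by
    rw [show D = s^2 from hs.symm]
    simp only [Complex.normSq_apply, Complex.add_re, Complex.add_im, Complex.sub_re,
      Complex.sub_im, Complex.mul_re, Complex.mul_im, Complex.ofReal_re, Complex.ofReal_im,
      pow_two, hz_re, hz_im]
    field_simp
    ring
  rw [habs, hwim, hz_im, hN, show D = s^2 from hs.symm]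
  field_simp
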